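/- arXiv:1604.04746 — 3 statements merged into one kernel-verified Lean document; each statement's English description precedes it below -/
import Mathlib

section
/- Let M be a class of morphisms of simplicial sets such that: (i) every member of M is a Kan fibration; (ii) M is closed under pullback along arbitrary morphisms (any pullback of a member of M is in M); (iii) M has the descent property: for every horn inclusion h : Λ[n,k] ⟶ Δ[n] and every f : X ⟶ Λ[n,k] in M there exists g : Y ⟶ Δ[n] in M whose pullback along h is isomorphic to f over Λ[n,k]. Suppose 𝓊 : U ⟶ V belongs to M and is universal for M, meaning that every f : X ⟶ Z in M is the pullback of 𝓊 along a unique morphism χ(f) : Z ⟶ V. Then V is a Kan complex: every morphism Λ[n,k] ⟶ V (n ≥ 1, 0 ≤ k ≤ n) extends along the horn inclusion to a morphism Δ[n] ⟶ V. -/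
open CategoryTheory Simplicial CategoryTheory.GrothendieckTopology

universe u

/-- A morphism of simplicial sets is a *Kan fibration* if it has the right lifting
property with respect to every horn inclusion `Λ[n, i] ⟶ Δ[n]` with `n ≥ 1`. -/
def IsKanFibration {X Y : SSet} (f : X ⟶ Y) : Prop :=
  ∀ ⦃n : ℕ⦄ (i : Fin (n + 2)), HasLiftingProperty (Λ[n + 1, i].ι) f

/-- If `𝓊 : U ⟶ V` is a universal modest fibration, then `V` is fibrant (a Kan
complex): given a class `M` of Kan fibrations closed under pullback and satisfying
descent along horn inclusions, if every member of `M` is the pullback of `𝓊` along a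
unique classifying morphism, then every horn `Λ[n, k] ⟶ V` extends to `Δ[n] ⟶ V`. -/
theorem fibrant_universe (M : MorphismProperty SSet)
    (hkan : ∀ {X Y : SSet} (f : X ⟶ Y), M f → IsKanFibration f)
    (hpb : ∀ {P X Y Z : SSet} (p₁ : P ⟶ X) (p₂ : P ⟶ Y) (f : X ⟶ Z) (g : Y ⟶ Z),
      IsPullback p₁ p₂ f g → M f → M p₂)
    (hdesc : ∀ (n : ℕ), 1 ≤ n → ∀ (k : Fin (n + 1)) {X : SSet} (f : X ⟶ Λ[n, k]),
      M f → ∃ (Y : SSet) (g : Y ⟶ Δ[n]) (t : X ⟶ Y),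
        M g ∧ IsPullback t f g (Λ[n, k].ι))
    {U V : SSet} (u : U ⟶ V) (hu : M u)
    (huniv : ∀ {X Z : SSet} (f : X ⟶ Z), M f →
      ∃! χ : Z ⟶ V, ∃ t : X ⟶ U, IsPullback t f u χ) :
    ∀ (n : ℕ), 1 ≤ n → ∀ (k : Fin (n + 1)) (σ₀ : (Λ[n, k] : SSet) ⟶ V),
      ∃ σ : Δ[n] ⟶ V, σ₀ = Λ[n, k].ι ≫ σ := by
  intro n hn k σ₀
  -- pull back u along σ₀
  have hsq : IsPullback (Limits.pullback.fst u σ₀) (Limits.pullback.snd u σ₀) u σ₀ :=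
    IsPullback.of_hasPullback u σ₀
  have hf : M (Limits.pullback.snd u σ₀) := hpb _ _ _ _ hsq hu
  obtain ⟨Y, g, t, hg, hYpb⟩ := hdesc n hn k _ hf
  obtain ⟨χ, ⟨t', hχ⟩, -⟩ := huniv g hg
  obtain ⟨χ₀, -, huniq⟩ := huniv (Limits.pullback.snd u σ₀) hf
  refine ⟨χ, ?_⟩
  have h1 : σ₀ = χ₀ := huniq σ₀ ⟨_, hsq⟩
  have h2 : Λ[n, k].ι ≫ χ = χ₀ :=
    huniq _ ⟨t ≫ t', hYpb.paste_horiz hχ⟩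
  rw [h1, ← h2]
end

section
/- Let p ≥ 0, e ∈ Fin(p+1), and let F be a set of subsets of Fin(p+1) each containing e. Let j ≥ 1 and let Σ ⊆ Fin(p+1) satisfy e ∈ Σ, |Σ| = j+1, and Σ is not contained in any member of F. Set F_{j-1} = F ∪ { T ⊆ Fin(p+1) : e ∈ T and |T| = j }. Then, as subpresheaves of Δ[p], Face(Σ) ⊓ (⨆_{T ∈ F_{j-1}} Face(T)) = ⨆_{i ∈ Σ, i ≠ e} Face(Σ \ {i}); that is, the intersection of the face on Σ with the union of the faces indexed by F_{j-1} is the horn of Face(Σ) centered at the vertex e. -/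
open CategoryTheory Simplicial CategoryTheory.GrothendieckTopology

universe u

namespace CategoryTheory.GrothendieckTopology.Subpresheaf

variable {C : Type*} [Category C] {F : Cᵒᵖ ⥤ Type u}

instance : InfSet (Subfunctor F) where
  sInf S :=
    { obj := fun U => ⋂ G ∈ S, Subfunctor.obj G U
      map := by
        intro U V i x hx
        simp only [Set.mem_iInter, Set.mem_preimage] at hx ⊢
        intro G hG
        exact G.map i (hx G hG) }

theorem sInf_obj (S : Set (Subfunctor F)) (U : Cᵒᵖ) :
    (sInf S).obj U = ⋂ G ∈ S, Subfunctor.obj G U := rfl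

/-- Subpresheaves of a presheaf of types form a complete lattice under objectwise
inclusion, with intersections (and hence unions) computed objectwise. -/
noncomputable instance : CompleteLattice (Subfunctor F) :=
  completeLatticeOfInf _ (fun S =>
    ⟨fun G hG U x hx => by
        rw [sInf_obj] at hx
        exact Set.mem_iInter₂.1 hx G hG,
     fun G hG U x hx => by
        rw [sInf_obj]
        exact Set.mem_iInter₂.2 fun H hH => hG hH U hx⟩)

end CategoryTheory.GrothendieckTopology.Subpresheaf

namespace CategoryTheory.GrothendieckTopology

/-- A subpresheaf of a simplicial set, regarded as a simplicial set. -/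
def Subpresheaf.sset {F : SSet} (G : Subfunctor F) : SSet := G.toFunctor

/-- The inclusion morphism of a subpresheaf of a simplicial set. -/
def Subpresheaf.ssetι {F : SSet} (G : Subfunctor F) : Subpresheaf.sset G ⟶ F := G.ι

/-- The inclusion morphism between two nested subpresheaves of a simplicial set. -/
def Subpresheaf.ssetHomOfLe {F : SSet} {G G' : Subfunctor F} (h : G ≤ G') :
    Subpresheaf.sset G ⟶ Subpresheaf.sset G' := Subfunctor.homOfLe h

end CategoryTheory.GrothendieckTopology

/-- `SSet.face p S` is the face of the standard simplex `Δ[p]` spanned by the set of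
vertices `S ⊆ Fin (p+1)` : the subpresheaf whose simplices are the monotone maps with
image (range) contained in `S`. -/
def SSet.face (p : ℕ) (S : Set (Fin (p + 1))) : Subfunctor (Δ[p] : SSet) where
  obj m := { α | Set.range (SSet.stdSimplex.asOrderHom α) ⊆ S }
  map := by
    intro U V i x hx y hy
    apply hx
    obtain ⟨z, rfl⟩ := hy
    exact ⟨i.unop.toOrderHom z, rfl⟩


section Aux

open CategoryTheory

variable {C : Type*} [Category C] {P : Cᵒᵖ ⥤ Type u}

/-- Objectwise union subpresheaf. -/
def unionSub {ι : Sort*} (G : ι → Subfunctor P) : Subfunctor P where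
  obj U := ⋃ i, (G i).obj U
  map := by
    intro U V f x hx
    obtain ⟨s, ⟨i, rfl⟩, hx⟩ := hx
    exact Set.mem_iUnion.2 ⟨i, (G i).map f hx⟩

lemma iSup_obj_eq {ι : Sort*} (G : ι → Subfunctor P) (U : Cᵒᵖ) :
    (⨆ i, G i).obj U = ⋃ i, (G i).obj U := by
  apply le_antisymm
  · exact (iSup_le (fun i => show G i ≤ unionSub G from
      fun V x hx => Set.mem_iUnion.2 ⟨i, hx⟩) : (⨆ i, G i) ≤ unionSub G) U
  · exact Set.iUnion_subset fun i => (le_iSup G i : G i ≤ ⨆ i, G i) U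

/-- Objectwise intersection subpresheaf. -/
def interSub (A B : Subfunctor P) : Subfunctor P where
  obj U := A.obj U ∩ B.obj U
  map := fun f x hx => ⟨A.map f hx.1, B.map f hx.2⟩

lemma inf_obj_eq (A B : Subfunctor P) (U : Cᵒᵖ) :
    (A ⊓ B).obj U = A.obj U ∩ B.obj U := by
  have : A ⊓ B = interSub A B := by
    apply le_antisymm
    · exact fun U x hx => ⟨(inf_le_left : A ⊓ B ≤ A) U hx,
        (inf_le_right : A ⊓ B ≤ B) U hx⟩
    · exact le_inf (fun U x hx => hx.1) (fun U x hx => hx.2)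
  rw [this]; rfl

end Aux

/-- If `Σ` is a face of dimension `j ≥ 1` containing the vertex `e` which is not
contained in any member of `F`, then the intersection of `Face Σ` with the union of
the faces indexed by `F_{j-1} = F ∪ {T : e ∈ T, |T| = j}` is the horn of `Face Σ`
centered at the vertex `e`. -/
theorem face_inter_skeleton_eq_horn (p : ℕ) (e : Fin (p + 1))
    (F : Set (Finset (Fin (p + 1)))) (he : ∀ T ∈ F, e ∈ T)
    (j : ℕ) (hj : 1 ≤ j) (S : Finset (Fin (p + 1)))
    (heS : e ∈ S) (hcard : S.card = j + 1) (hnot : ∀ T ∈ F, ¬ S ⊆ T) :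
    SSet.face p (S : Set (Fin (p + 1))) ⊓
        (⨆ T ∈ F ∪ setOf (fun T : Finset (Fin (p + 1)) => e ∈ T ∧ T.card = j),
          SSet.face p (T : Set (Fin (p + 1)))) =
      ⨆ i : { i : Fin (p + 1) // i ∈ S ∧ i ≠ e },
        SSet.face p ((S.erase i.1 : Finset (Fin (p + 1))) : Set (Fin (p + 1))) := by
  apply le_antisymm
  · intro U x hx
    rw [inf_obj_eq] at hx
    obtain ⟨hS, hF⟩ := hx
    rw [iSup_obj_eq] at hF
    simp only [Set.mem_iUnion] at hF
    obtain ⟨T, hT⟩ := hF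
    rw [iSup_obj_eq] at hT
    simp only [Set.mem_iUnion] at hT
    obtain ⟨hTmem, hRT⟩ := hT
    rw [iSup_obj_eq]
    simp only [Set.mem_iUnion]
    -- find i ∈ S, i ∉ T, i ≠ e
    have key : ∃ i, i ∈ S ∧ i ∉ T ∧ i ≠ e := by
      rcases hTmem with hTF | hTj
      · obtain ⟨i, hiS, hiT⟩ := Finset.not_subset.1 (hnot T hTF)
        exact ⟨i, hiS, hiT, fun h => hiT (h ▸ he T hTF)⟩
      · obtain ⟨heT, hcardT⟩ := hTj
        have : ¬ S ⊆ T := fun h => by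
          have := Finset.card_le_card h
          omega
        obtain ⟨i, hiS, hiT⟩ := Finset.not_subset.1 this
        exact ⟨i, hiS, hiT, fun h => hiT (h ▸ heT)⟩
    obtain ⟨i, hiS, hiT, hie⟩ := key
    refine ⟨⟨i, hiS, hie⟩, ?_⟩
    intro y hy
    simp only [Finset.coe_erase, Set.mem_diff, Set.mem_singleton_iff]
    refine ⟨hS hy, ?_⟩
    intro h
    exact hiT (by simpa [h] using hRT hy)
  · apply iSup_le
    rintro ⟨i, hiS, hie⟩
    intro U x hx
    rw [inf_obj_eq]
    constructor
    · intro y hy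
      have := hx hy
      simp only [Finset.coe_erase, Set.mem_diff] at this
      exact this.1
    · rw [iSup_obj_eq]
      simp only [Set.mem_iUnion]
      refine ⟨S.erase i, ?_⟩
      rw [iSup_obj_eq]
      simp only [Set.mem_iUnion]
      refine ⟨Or.inr ⟨Finset.mem_erase.2 ⟨hie.symm, heS⟩, ?_⟩, hx⟩
      rw [Finset.card_erase_of_mem hiS, hcard]; omega
end

section
/- Fix n ≥ 1, k ∈ Fin(n+1), m ≥ 0, and a monotone map ξ : Fin(m+1) → Fin(n+1), with ‖ξ‖, K₀(ξ), λ(ξ), κ(ξ) as defined. Then: (i) K₀(ξ) : Fin(m+1+‖ξ‖) → Fin(n+1) is monotone (nondecreasing); (ii) λ(ξ) : Fin(m+1) → Fin(m+1+‖ξ‖) is a strictly monotone injection; (iii) K₀(ξ) ∘ λ(ξ) = ξ; and (iv) the image of λ(ξ) is exactly the complement in Fin(m+1+‖ξ‖) of the image of κ(ξ). -/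
open CategoryTheory Simplicial CategoryTheory.GrothendieckTopology

set_option maxRecDepth 10000
universe u

section Xi

variable {n m : ℕ} (k : Fin (n + 1)) (ξ : Fin (m + 1) →o Fin (n + 1))

/-- The fiber `ξ_j = {i : ξ i = j}` of `ξ` over `j : Fin (n+1)`, ordered as a subset
of `Fin (m+1)`. -/
abbrev xiFiber (j : Fin (n + 1)) : Type := { i : Fin (m + 1) // ξ i = j }

/-- The product `∏_{j ≠ k} ξ_j` of the fibers of `ξ` away from `k`, equipped with the
lexicographic order. -/
abbrev xiProd : Type := Lex (∀ j : { j : Fin (n + 1) // j ≠ k }, xiFiber ξ j.1)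

/-- The lexicographic linear order on `∏_{j ≠ k} ξ_j`. -/
noncomputable instance : LinearOrder (xiProd k ξ) :=
  @Pi.Lex.linearOrder { j : Fin (n + 1) // j ≠ k }
    (fun j => xiFiber ξ j.1) _ Finite.to_wellFoundedLT _

instance : Fintype (xiProd k ξ) :=
  inferInstanceAs (Fintype (∀ j : { j : Fin (n + 1) // j ≠ k }, xiFiber ξ j.1))

/-- `‖ξ‖`, the number of elements of the product `∏_{j ≠ k} ξ_j`. -/
noncomputable def xiNorm : ℕ := Fintype.card (xiProd k ξ)

/-- The number of `i` with `ξ i < k`; this is the least index `i` with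
`K₀(ξ)(i) = k`, i.e. the start of the interval complementary to the image of `λ(ξ)`. -/
noncomputable def xiStart : ℕ := Fintype.card { i : Fin (m + 1) // ξ i < k }

lemma xiStart_le : xiStart k ξ ≤ m + 1 := by
  simpa [xiStart] using Fintype.card_subtype_le (fun i : Fin (m + 1) => ξ i < k)

/-- `K₀(ξ) : Fin (m+1+‖ξ‖) → Fin (n+1)`, defined by `K₀(ξ)(i) = ξ(i)` if `i ≤ m` and
`ξ(i) < k`; `K₀(ξ)(i) = ξ(i-‖ξ‖)` if `i ≥ ‖ξ‖` and `ξ(i-‖ξ‖) > k`; and `K₀(ξ)(i) = k`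
otherwise. -/
noncomputable def K0 (i : Fin (m + xiNorm k ξ + 1)) : Fin (n + 1) :=
  if h : i.1 ≤ m ∧ ξ ⟨min i.1 m, by omega⟩ < k then ξ ⟨min i.1 m, by omega⟩
  else if h' : xiNorm k ξ ≤ i.1 ∧ k < ξ ⟨i.1 - xiNorm k ξ, by have := i.isLt; omega⟩ then
    ξ ⟨i.1 - xiNorm k ξ, by have := i.isLt; omega⟩
  else k

/-- `λ(ξ) : Fin (m+1) → Fin (m+1+‖ξ‖)`: `λ(ξ)(i) = i` if `ξ i < k` and
`λ(ξ)(i) = i + ‖ξ‖` if `ξ i ≥ k`. -/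
noncomputable def lam (i : Fin (m + 1)) : Fin (m + xiNorm k ξ + 1) :=
  if ξ i < k then ⟨i.1, by omega⟩ else ⟨i.1 + xiNorm k ξ, by omega⟩

/-- The enumeration of the lexicographically ordered product `∏_{j ≠ k} ξ_j` by
`Fin ‖ξ‖`. -/
noncomputable def xiLexIso : Fin (xiNorm k ξ) ≃o xiProd k ξ :=
  Fintype.orderIsoFinOfCardEq _ rfl

/-- `κ(ξ)`: the order-preserving injection sending the lexicographic product
`∏_{j ≠ k} ξ_j` onto the interval of length `‖ξ‖` in `Fin (m+1+‖ξ‖)` starting at the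
least index `i` with `K₀(ξ)(i) = k` (the complement of the image of `λ(ξ)`). -/
noncomputable def kappa (x : xiProd k ξ) : Fin (m + xiNorm k ξ + 1) :=
  ⟨xiStart k ξ + ((xiLexIso k ξ).symm x).1, by
    have h1 := xiStart_le k ξ
    have h2 := ((xiLexIso k ξ).symm x).2
    omega⟩

end Xi

section Aux

variable {n m : ℕ} (k : Fin (n + 1)) (ξ : Fin (m + 1) →o Fin (n + 1))

lemma lt_xiStart_iff (i : Fin (m + 1)) : ξ i < k ↔ i.1 < xiStart k ξ := by
  have e1 : Fintype.card {x : Fin (m + 1) // x ≤ i} = i.1 + 1 := by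
    rw [← Nat.card_eq_fintype_card]
    exact (Nat.card_eq_fintype_card (α := ↑(Set.Iic i))).trans (by simp)
  have e2 : Fintype.card {x : Fin (m + 1) // x < i} = i.1 := by
    rw [← Nat.card_eq_fintype_card]
    exact (Nat.card_eq_fintype_card (α := ↑(Set.Iio i))).trans (by simp)
  constructor
  · intro h
    have := Fintype.card_subtype_mono (fun j => j ≤ i) (fun j => ξ j < k)
      (fun j hj => lt_of_le_of_lt (ξ.monotone hj) h)
    rw [e1] at this
    exact this
  · intro h
    by_contra hk
    have := Fintype.card_subtype_mono (fun j => ξ j < k) (fun j => j < i)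
      (fun j hj => lt_of_not_ge (fun hle : i ≤ j => hk (lt_of_le_of_lt (ξ.monotone hle) hj)))
    rw [e2] at this
    have : xiStart k ξ ≤ i.1 := this
    omega

attribute [irreducible] xiNorm xiStart xiLexIso

lemma K0_eq_low (i : Fin (m + xiNorm k ξ + 1)) (h : i.1 < xiStart k ξ) :
    K0 k ξ i = ξ ⟨i.1, by have := xiStart_le k ξ; omega⟩ := by
  have hc := xiStart_le k ξ
  unfold K0
  split_ifs with h1 h2
  · exact congrArg ξ (Fin.ext (by simp; omega))
  all_goals
    exact absurd ⟨by omega, (lt_xiStart_iff k ξ _).mpr (by simp; omega)⟩ h1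

lemma K0_eq_mid (i : Fin (m + xiNorm k ξ + 1)) (h1 : xiStart k ξ ≤ i.1)
    (h2 : i.1 < xiStart k ξ + xiNorm k ξ) : K0 k ξ i = k := by
  have hc := xiStart_le k ξ
  unfold K0
  split_ifs with ha hb
  · exfalso
    have := (lt_xiStart_iff k ξ _).mp ha.2
    simp at this; omega
  · exfalso
    have := (lt_xiStart_iff k ξ _).mpr (show (⟨i.1 - xiNorm k ξ, by have := i.isLt; omega⟩ :
      Fin (m + 1)).1 < xiStart k ξ by simp; omega)
    exact absurd (lt_trans hb.2 this) (lt_irrefl k)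
  · rfl

lemma K0_eq_high (i : Fin (m + xiNorm k ξ + 1)) (h : xiStart k ξ + xiNorm k ξ ≤ i.1) :
    K0 k ξ i = ξ ⟨i.1 - xiNorm k ξ, by have := i.isLt; omega⟩ := by
  have hc := xiStart_le k ξ
  have hk : k ≤ ξ ⟨i.1 - xiNorm k ξ, by have := i.isLt; omega⟩ := by
    by_contra hlt
    have := (lt_xiStart_iff k ξ _).mp (lt_of_not_ge hlt)
    simp at this; omega
  unfold K0
  split_ifs with ha hb
  · exfalso
    have := (lt_xiStart_iff k ξ _).mp ha.2
    simp at this; omega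
  · exact congrArg ξ (Fin.ext (by simp))
  · push_neg at hb
    exact le_antisymm hk (le_of_not_gt (fun hlt => absurd hlt (not_lt.mpr (hb (by omega)))))

lemma mem_range_kappa (j : Fin (m + xiNorm k ξ + 1)) :
    j ∈ Set.range (kappa k ξ) ↔ xiStart k ξ ≤ j.1 ∧ j.1 < xiStart k ξ + xiNorm k ξ := by
  constructor
  · rintro ⟨x, rfl⟩
    have := ((xiLexIso k ξ).symm x).2
    simp [kappa]
  · rintro ⟨h1, h2⟩
    refine ⟨xiLexIso k ξ ⟨j.1 - xiStart k ξ, by omega⟩, ?_⟩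
    simp only [kappa, OrderIso.symm_apply_apply]
    exact Fin.ext (by simp; omega)

end Aux

/-- Basic properties of `K₀(ξ)`, `λ(ξ)` and `κ(ξ)`: `K₀(ξ)` is monotone, `λ(ξ)` is a
strictly monotone injection, `K₀(ξ) ∘ λ(ξ) = ξ`, and the image of `λ(ξ)` is exactly
the complement of the image of `κ(ξ)`. -/
theorem K0_lam_kappa_properties (n m : ℕ) (hn : 1 ≤ n) (k : Fin (n + 1))
    (ξ : Fin (m + 1) →o Fin (n + 1)) :
    Monotone (K0 k ξ) ∧
      (StrictMono (lam k ξ) ∧ Function.Injective (lam k ξ)) ∧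
      (∀ i, K0 k ξ (lam k ξ i) = ξ i) ∧
      Set.range (lam k ξ) = (Set.range (kappa k ξ))ᶜ := by
  set c := xiStart k ξ with hcdef
  set N := xiNorm k ξ with hNdef
  have hc := xiStart_le k ξ
  refine ⟨?_, ?_, ?_, ?_⟩
  · -- Monotone K0
    intro i j hij
    have hij' : i.1 ≤ j.1 := hij
    rcases lt_or_ge j.1 c with hj | hj
    · rw [K0_eq_low k ξ i (by omega), K0_eq_low k ξ j hj]
      exact ξ.monotone (Fin.mk_le_mk.mpr hij')
    · rcases lt_or_ge j.1 (c + N) with hj2 | hj2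
      · rw [K0_eq_mid k ξ j hj hj2]
        rcases lt_or_ge i.1 c with hi | hi
        · rw [K0_eq_low k ξ i hi]
          exact le_of_lt ((lt_xiStart_iff k ξ _).mpr (by exact hi))
        · rw [K0_eq_mid k ξ i hi (by omega)]
      · have hjk : k ≤ ξ ⟨j.1 - N, by have := j.isLt; omega⟩ := by
          by_contra hlt
          have h2 : j.1 - N < c := (lt_xiStart_iff k ξ _).mp (lt_of_not_ge hlt)
          omega
        rw [K0_eq_high k ξ j hj2]
        rcases lt_or_ge i.1 c with hi | hi
        · rw [K0_eq_low k ξ i hi]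
          exact le_trans (le_of_lt ((lt_xiStart_iff k ξ _).mpr (by exact hi))) hjk
        · rcases lt_or_ge i.1 (c + N) with hi2 | hi2
          · rw [K0_eq_mid k ξ i hi hi2]; exact hjk
          · rw [K0_eq_high k ξ i hi2]
            exact ξ.monotone (Fin.mk_le_mk.mpr (by omega))
  · -- StrictMono and Injective lam
    have hsm : StrictMono (lam k ξ) := by
      intro i j hij
      have hij' : i.1 < j.1 := hij
      simp only [lam]
      split_ifs with h1 h2 h2
      · exact Fin.mk_lt_mk.mpr hij'
      · exact Fin.mk_lt_mk.mpr (by omega)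
      · exact absurd (lt_of_le_of_lt (ξ.monotone hij.le) h2) h1
      · exact Fin.mk_lt_mk.mpr (by omega)
    exact ⟨hsm, hsm.injective⟩
  · -- K0 ∘ lam = ξ
    intro i
    by_cases h : ξ i < k
    · have hlt : i.1 < c := by
        have := (lt_xiStart_iff k ξ i).mp h; omega
      have hval : (lam k ξ i).1 = i.1 := by unfold lam; rw [if_pos h]
      rw [show lam k ξ i = ⟨i.1, by omega⟩ from Fin.ext hval,
        K0_eq_low k ξ _ (by exact hlt)]
    · have hge : c ≤ i.1 := by
        by_contra hlt
        exact h ((lt_xiStart_iff k ξ i).mpr (by omega))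
      have hval : (lam k ξ i).1 = i.1 + N := by unfold lam; rw [if_neg (by exact h)]
      rw [show lam k ξ i = ⟨i.1 + N, by have := i.isLt; omega⟩ from Fin.ext hval,
        K0_eq_high k ξ _ (by show c + N ≤ i.1 + N; omega)]
      exact congrArg ξ (Fin.ext (show i.1 + N - N = i.1 by omega))
  · -- range lam = (range kappa)ᶜ
    ext j
    simp only [Set.mem_compl_iff, mem_range_kappa k ξ j]
    constructor
    · rintro ⟨i, rfl⟩
      by_cases h : ξ i < k
      · have hlt : i.1 < c := (lt_xiStart_iff k ξ i).mp h
        have hval : (lam k ξ i).1 = i.1 := by unfold lam; rw [if_pos h]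
        rw [hval]; omega
      · have hge : c ≤ i.1 := by
          by_contra hlt
          exact h ((lt_xiStart_iff k ξ i).mpr (by omega))
        have hval : (lam k ξ i).1 = i.1 + N := by unfold lam; rw [if_neg (by exact h)]
        rw [hval]; omega
    · intro hj
      push_neg at hj
      rcases lt_or_ge j.1 c with hlt | hge
      · refine ⟨⟨j.1, by omega⟩, ?_⟩
        have h : ξ ⟨j.1, by omega⟩ < k := (lt_xiStart_iff k ξ _).mpr (by exact hlt)
        refine Fin.ext ?_
        have : (lam k ξ ⟨j.1, by omega⟩).1 = j.1 := by unfold lam; rw [if_pos h]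
        rw [this]
      · have hge' : c + N ≤ j.1 := hj hge
        refine ⟨⟨j.1 - N, by have := j.isLt; omega⟩, ?_⟩
        have h : ¬ ξ ⟨j.1 - N, by have := j.isLt; omega⟩ < k := by
          intro hlt
          have h2 : j.1 - N < c := (lt_xiStart_iff k ξ _).mp hlt
          omega
        refine Fin.ext ?_
        have : (lam k ξ ⟨j.1 - N, by have := j.isLt; omega⟩).1 = j.1 - N + N := by
          unfold lam; rw [if_neg (by exact h)]
        rw [this]; omega
end
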